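/- Let V be a compact smooth manifold and A = C^∞(V,ℂ). The map m : Spec(A) → V sending a prime ideal to the unique point at which all its elements vanish is continuous, where Spec(A) carries the Zariski topology and V its manifold topology. -/

import Mathlib

open scoped Manifold
open Set

/-- `ℂ` is a smooth ring as a manifold over `ℝ`. -/
instance : ContMDiffRing 𝓘(ℝ, ℂ) (⊤ : ℕ∞) ℂ :=
  { instNormedSpaceLieAddGroup with
    contMDiff_mul := by
      rw [contMDiff_iff]
      refine ⟨continuous_mul, fun x y => ?_⟩
      simp only [mfld_simps, chartAt_self_eq]
      rw [contDiffOn_univ]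
      exact contDiff_mul }

/-- Evaluation at a point, as a ring homomorphism on the algebra `C^∞(V, ℂ)`
of smooth complex valued functions. -/
noncomputable def smoothEvalRingHom {E H : Type*} [NormedAddCommGroup E] [NormedSpace ℝ E]
    [TopologicalSpace H] (I : ModelWithCorners ℝ E H) (V : Type*) [TopologicalSpace V]
    [ChartedSpace H V] (x : V) : ContMDiffMap I 𝓘(ℝ, ℂ) V ℂ (⊤ : ℕ∞) →+* ℂ where
  toFun f := f x
  map_one' := rfl
  map_mul' _ _ := rfl
  map_zero' := rfl
  map_add' _ _ := rfl

/-- Complexify a smooth real-valued function. -/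
noncomputable def complexify {E H : Type*} [NormedAddCommGroup E] [NormedSpace ℝ E]
    [TopologicalSpace H] {I : ModelWithCorners ℝ E H} {V : Type*} [TopologicalSpace V]
    [ChartedSpace H V] (f : ContMDiffMap I 𝓘(ℝ) V ℝ (⊤ : ℕ∞)) : ContMDiffMap I 𝓘(ℝ, ℂ) V ℂ (⊤ : ℕ∞) :=
  ⟨fun v => (f v : ℂ), Complex.ofRealCLM.contMDiff.comp f.contMDiff⟩

/-- For a compact smooth manifold `V` with `A = C^∞(V, ℂ)`, the map
`m : Spec(A) → V` sending a prime ideal to the unique point at which all of its elements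
vanish is continuous, where `Spec(A)` carries the Zariski topology. -/
theorem primeSpectrum_to_manifold_continuous
    {E H : Type*} [NormedAddCommGroup E] [NormedSpace ℝ E] [FiniteDimensional ℝ E]
    [TopologicalSpace H] (I : ModelWithCorners ℝ E H)
    (V : Type*) [TopologicalSpace V] [ChartedSpace H V] [IsManifold I (⊤ : ℕ∞) V]
    [CompactSpace V] [T2Space V]
    (m : PrimeSpectrum (ContMDiffMap I 𝓘(ℝ, ℂ) V ℂ (⊤ : ℕ∞)) → V)
    (hm : ∀ 𝔭 : PrimeSpectrum (ContMDiffMap I 𝓘(ℝ, ℂ) V ℂ (⊤ : ℕ∞)),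
      𝔭.asIdeal ≤ RingHom.ker (smoothEvalRingHom I V (m 𝔭))) :
    Continuous m := by
  rw [continuous_def]
  intro U hU
  rw [isOpen_iff_forall_mem_open]
  intro 𝔭 h𝔭
  -- choose W open, m 𝔭 ∈ W, closure W ⊆ U
  obtain ⟨W, hWo, hxW, hWU⟩ := normal_exists_closure_subset
    (isClosed_singleton (x := m 𝔭)) hU (singleton_subset_iff.2 h𝔭)
  -- f : 1 at m 𝔭, 0 on Wᶜ
  obtain ⟨f, hf0, hf1, -⟩ := exists_contMDiffMap_zero_one_of_isClosed (n := (⊤ : ℕ∞)) I hWo.isClosed_compl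
    (isClosed_singleton (x := m 𝔭)) (by simpa [disjoint_compl_left_iff] using hxW)
  set F := complexify f with hF
  refine ⟨(PrimeSpectrum.basicOpen F : Set _), ?_, (PrimeSpectrum.basicOpen F).isOpen, ?_⟩
  · intro 𝔮 h𝔮
    rw [SetLike.mem_coe, PrimeSpectrum.mem_basicOpen] at h𝔮
    by_contra hy
    -- m 𝔮 ∉ U ⊆ closure W; so m 𝔮 ∉ closure W
    have hyW : m 𝔮 ∉ closure W := fun h => hy (hWU h)
    obtain ⟨g, hg0, hg1, -⟩ := exists_contMDiffMap_zero_one_of_isClosed (n := (⊤ : ℕ∞)) I isClosed_closure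
      (isClosed_singleton (x := m 𝔮)) (by simpa [disjoint_singleton_right] using hyW)
    set G := complexify g with hG
    have hFG : F * G = 0 := by
      ext v
      by_cases hv : v ∈ closure W
      · have : g v = 0 := hg0 hv
        change ((f v : ℝ) : ℂ) * ((g v : ℝ) : ℂ) = 0
        simp [this]
      · have : f v = 0 := hf0 (fun hvW => hv (subset_closure hvW))
        change ((f v : ℝ) : ℂ) * ((g v : ℝ) : ℂ) = 0
        simp [this]
    have hG𝔮 : G ∉ 𝔮.asIdeal := by
      intro h
      have := hm 𝔮 h
      rw [RingHom.mem_ker] at this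
      have hg : g (m 𝔮) = 1 := hg1 rfl
      change ((g (m 𝔮) : ℝ) : ℂ) = 0 at this
      simp [smoothEvalRingHom, hG, complexify, hg] at this
    have : F ∈ 𝔮.asIdeal ∨ G ∈ 𝔮.asIdeal :=
      𝔮.isPrime.mem_or_mem (by rw [hFG]; exact Ideal.zero_mem _)
    tauto
  · rw [SetLike.mem_coe, PrimeSpectrum.mem_basicOpen]
    intro h
    have := hm 𝔭 h
    rw [RingHom.mem_ker] at this
    have hfx : f (m 𝔭) = 1 := hf1 rfl
    change ((f (m 𝔭) : ℝ) : ℂ) = 0 at this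
    simp [smoothEvalRingHom, hF, complexify, hfx] at this
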